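/- If μ is a B-measure on the boundary of an origin-symmetric planar convex body K, and [x⁻, x⁺] is a non-degenerate line segment contained in ∂K, then μ([x⁻, x⁺]) = 0. -/

import Mathlib

open Set MeasureTheory Pointwise

abbrev Plane := ℝ × ℝ

/-- An origin-symmetric convex body in the plane: compact, convex,
nonempty interior, symmetric about the origin. -/
def IsSymmConvexBody (K : Set Plane) : Prop :=
  Convex ℝ K ∧ IsCompact K ∧ (interior K).Nonempty ∧ K = -K

/-- Birkhoff orthogonality with respect to the norm induced by `K`
(whose Minkowski functional is `gauge K`). -/
def BOrth (K : Set Plane) (x y : Plane) : Prop :=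
  ∀ t : ℝ, gauge K x ≤ gauge K (x + t • y)

/-- The set of Auerbach points of `K`. -/
def Auerbach (K : Set Plane) : Set Plane :=
  {x | x ∈ frontier K ∧ ∃ y ∈ frontier K, BOrth K x y ∧ BOrth K y x}

/-- `E(K)`: the union of the open non-degenerate segments contained in `∂K`. -/
def SegUnion (K : Set Plane) : Set Plane :=
  {x | ∃ a b : Plane, a ≠ b ∧ segment ℝ a b ⊆ frontier K ∧ x ∈ openSegment ℝ a b}

/-- A closed antipode-free arc of `∂K` with endpoints `x` and `y`:
a closed connected subset of `∂K` containing `x` and `y`, containing no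
pair of antipodal points, and minimal with these properties. -/
def IsBArc (K C : Set Plane) (x y : Plane) : Prop :=
  C ⊆ frontier K ∧ IsClosed C ∧ IsPreconnected C ∧ x ∈ C ∧ y ∈ C ∧
  (∀ z ∈ C, -z ∉ C) ∧
  ∀ C' ⊆ C, IsClosed C' → IsPreconnected C' → x ∈ C' → y ∈ C' → C' = C

/-- An angular measure on `∂K`. -/
def IsAngularMeasure (K : Set Plane) (μ : Measure Plane) : Prop :=
  μ (frontier K) = ENNReal.ofReal (2 * Real.pi) ∧
  μ (frontier K)ᶜ = 0 ∧
  (∀ X : Set Plane, μ (-X) = μ X) ∧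
  (∀ x : Plane, μ {x} = 0)

/-- A B-measure: an angular measure giving `π/2` to every closed
antipode-free arc whose endpoints are Birkhoff orthogonal. -/
def IsBMeasure (K : Set Plane) (μ : Measure Plane) : Prop :=
  IsAngularMeasure K μ ∧
  ∀ C x y, IsBArc K C x y → BOrth K x y → μ C = ENNReal.ofReal (Real.pi / 2)

/-- The support of a Borel measure: the points all of whose open
neighborhoods have positive measure. -/
def msupp {α : Type*} [TopologicalSpace α] [MeasurableSpace α]
    (μ : Measure α) : Set α :=
  {x | ∀ U : Set α, IsOpen U → x ∈ U → 0 < μ U}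

/-- Any B-measure vanishes on non-degenerate segments of the boundary. -/
lemma arc_construct {K : Set Plane}
    (hfr : ∀ x : Plane, x ∈ frontier K ↔ gauge K x = 1)
    (hpos : ∀ x : Plane, x ≠ 0 → 0 < gauge K x)
    (hcont : Continuous (gauge K))
    (gabs : ∀ (r : ℝ) (x : Plane), gauge K (r • x) = |r| * gauge K x)
    (p q : Plane) (hp : gauge K p = 1) (hq : gauge K q = 1)
    (hind : ∀ s t : ℝ, s • p + t • q = 0 → s = 0 ∧ t = 0) :
    ∃ C : Set Plane, IsBArc K C p q ∧
      ∀ x : Plane, x ∈ C ↔ gauge K x = 1 ∧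
        ∃ s t : ℝ, 0 ≤ s ∧ 0 ≤ t ∧ x = s • p + t • q := by
  set w : ℝ → Plane := fun u => (1 - u) • p + u • q with hw
  have hw0 : ∀ u : ℝ, w u ≠ 0 := by
    intro u h
    obtain ⟨h1, h2⟩ := hind _ _ h
    rw [h2] at h1
    norm_num at h1
  have hgw : ∀ u : ℝ, 0 < gauge K (w u) := fun u => hpos _ (hw0 u)
  set f : ℝ → Plane := fun u => (gauge K (w u))⁻¹ • w u with hf
  have hcw : Continuous w := by
    simp only [hw]
    fun_prop
  have hcf : Continuous f := ((hcont.comp hcw).inv₀ fun u => (hgw u).ne').smul hcw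
  have hgf : ∀ u : ℝ, gauge K (f u) = 1 := by
    intro u
    simp only [hf]
    rw [gabs, abs_of_pos (inv_pos.2 (hgw u)), inv_mul_cancel₀ (hgw u).ne']
  have hf0 : f 0 = p := by
    have hwp : w 0 = p := by simp [hw]
    simp only [hf, hwp, hp]
    norm_num
  have hf1 : f 1 = q := by
    have hwq : w 1 = q := by simp [hw]
    simp only [hf, hwq, hq]
    norm_num
  have hinj : ∀ u₁ u₂ : ℝ, f u₁ = f u₂ → u₁ = u₂ := by
    intro u₁ u₂ h
    set g₁ := gauge K (w u₁) with hg₁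
    set g₂ := gauge K (w u₂) with hg₂
    set L := g₂ * g₁⁻¹ with hL
    simp only [hf] at h
    have h' : g₁⁻¹ • w u₁ = g₂⁻¹ • w u₂ := h
    have h2 : L • w u₁ = w u₂ := by
      rw [hL, ← smul_smul, h', smul_smul, mul_inv_cancel₀ (hgw u₂).ne', one_smul]
    have key : ((1 - u₂) - L * (1 - u₁)) • p + (u₂ - L * u₁) • q = w u₂ - L • w u₁ := by
      simp only [hw]
      module
    have h0 : w u₂ - L • w u₁ = 0 := by rw [h2, sub_self]
    obtain ⟨e1, e2⟩ := hind _ _ (key.trans h0)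
    have hLpos : 0 < L := mul_pos (hgw u₂) (inv_pos.2 (hgw u₁))
    have hL1 : L = 1 := by nlinarith [e1, e2]
    rw [hL1] at e2
    linarith
  have hrep : ∀ u : ℝ, ∃ s t : ℝ, 0 ≤ s ∧ 0 ≤ t ∧ f u = s • p + t • q → True := fun _ => ⟨0,0,by simp⟩
  -- real representation lemma (only valid for u ∈ Icc 0 1)
  have hrep' : ∀ u ∈ Icc (0:ℝ) 1, ∃ s t : ℝ, 0 ≤ s ∧ 0 ≤ t ∧ f u = s • p + t • q := by
    intro u hu
    refine ⟨(gauge K (w u))⁻¹ * (1 - u), (gauge K (w u))⁻¹ * u,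
      mul_nonneg (inv_pos.2 (hgw u)).le (by linarith [hu.2]),
      mul_nonneg (inv_pos.2 (hgw u)).le hu.1, ?_⟩
    simp only [hf, hw, smul_add, smul_smul]
  have hmem : ∀ x : Plane, gauge K x = 1 → ∀ s t : ℝ, 0 ≤ s → 0 ≤ t →
      x = s • p + t • q → ∃ u ∈ Icc (0:ℝ) 1, f u = x := by
    intro x hx s t hs ht hxe
    have hst : 0 < s + t := by
      rcases (add_nonneg hs ht).lt_or_eq with h | h
      · exact h
      · exfalso
        have hs0 : s = 0 := by linarith
        have ht0 : t = 0 := by linarith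
        rw [hs0, ht0] at hxe
        simp at hxe
        rw [hxe, gauge_zero] at hx
        norm_num at hx
    refine ⟨t / (s + t), ⟨div_nonneg ht hst.le, by
      rw [div_le_one hst]; linarith⟩, ?_⟩
    have hwu : w (t / (s + t)) = (s + t)⁻¹ • x := by
      have h1 : 1 - t / (s + t) = (s + t)⁻¹ * s := by field_simp; ring
      have h2 : t / (s + t) = (s + t)⁻¹ * t := by rw [div_eq_inv_mul]
      simp only [hw]
      rw [h1, h2, hxe, smul_add, smul_smul, smul_smul]
    rw [hf]
    simp only
    rw [hwu, gabs, abs_of_pos (inv_pos.2 hst), hx, mul_one, inv_inv, smul_smul,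
      mul_inv_cancel₀ hst.ne', one_smul]
  refine ⟨f '' Icc 0 1, ?_, ?_⟩
  swap
  · intro x
    constructor
    · rintro ⟨u, hu, rfl⟩
      obtain ⟨s, t, hs, ht, he⟩ := hrep' u hu
      exact ⟨hgf u, s, t, hs, ht, he⟩
    · rintro ⟨hgx, s, t, hs, ht, hxe⟩
      obtain ⟨u, hu, he⟩ := hmem x hgx s t hs ht hxe
      exact ⟨u, hu, he⟩
  refine ⟨?_, ?_, ?_, ?_, ?_, ?_, ?_⟩
  · rintro x ⟨u, hu, rfl⟩
    exact (hfr _).2 (hgf u)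
  · exact (isCompact_Icc.image hcf).isClosed
  · exact isPreconnected_Icc.image f hcf.continuousOn
  · exact ⟨0, ⟨le_refl 0, zero_le_one⟩, hf0⟩
  · exact ⟨1, ⟨zero_le_one, le_refl 1⟩, hf1⟩
  · rintro z ⟨u, hu, rfl⟩ ⟨u', hu', he'⟩
    obtain ⟨s, t, hs, ht, he⟩ := hrep' u hu
    obtain ⟨s', t', hs', ht', he2⟩ := hrep' u' hu'
    have hsum : (s + s') • p + (t + t') • q = 0 := by
      have : (s + s') • p + (t + t') • q = (s • p + t • q) + (s' • p + t' • q) := by module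
      rw [this, ← he, ← he2, he', add_neg_cancel]
    obtain ⟨e1, e2⟩ := hind _ _ hsum
    have hs0 : s = 0 := by linarith
    have ht0 : t = 0 := by linarith
    have hz : f u = 0 := by rw [he, hs0, ht0]; simp
    have h1 := hgf u
    rw [hz, gauge_zero] at h1
    norm_num at h1
  · intro C' hC'sub hC'cl hC'conn hpC' hqC'
    have hall : ∀ u ∈ Icc (0:ℝ) 1, f u ∈ C' := by
      intro u hu
      by_contra hfu
      have h1 : IsClosed (f '' Icc 0 u) := (isCompact_Icc.image hcf).isClosed
      have h2 : IsClosed (f '' Icc u 1) := (isCompact_Icc.image hcf).isClosed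
      have hcover : C' ⊆ f '' Icc 0 u ∪ f '' Icc u 1 := by
        intro x hx
        obtain ⟨u', hu', he⟩ := hC'sub hx
        rcases le_total u' u with h | h
        · exact Or.inl ⟨u', ⟨hu'.1, h⟩, he⟩
        · exact Or.inr ⟨u', ⟨h, hu'.2⟩, he⟩
      obtain ⟨x, hxC', hx1, hx2⟩ := isPreconnected_closed_iff.1 hC'conn _ _ h1 h2 hcover
        ⟨p, hpC', ⟨0, ⟨le_refl 0, hu.1⟩, hf0⟩⟩ ⟨q, hqC', ⟨1, ⟨hu.2, le_refl 1⟩, hf1⟩⟩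
      obtain ⟨u₁, hu₁, he₁⟩ := hx1
      obtain ⟨u₂, hu₂, he₂⟩ := hx2
      have hu12 : u₁ = u₂ := hinj _ _ (he₁.trans he₂.symm)
      have huu : u₁ = u := le_antisymm hu₁.2 (hu12 ▸ hu₂.1)
      exact hfu (by rw [← huu, he₁]; exact hxC')
    refine Subset.antisymm hC'sub ?_
    rintro x ⟨u, hu, rfl⟩
    exact hall u hu

theorem stmt_1 (K : Set Plane) (hK : IsSymmConvexBody K)
    (μ : Measure Plane) (hμ : IsBMeasure K μ)
    (a b : Plane) (hab : a ≠ b) (hseg : segment ℝ a b ⊆ frontier K) :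
    μ (segment ℝ a b) = 0 := by
  obtain ⟨hconv, hcomp, hint, hKsymm⟩ := hK
  -- basic facts about K and gauge
  have h0i : (0 : Plane) ∈ interior K := by
    obtain ⟨x0, hx0⟩ := hint
    have hx0' : -x0 ∈ interior K := by
      have h1 : x0 ∈ interior (-K) := by rw [← hKsymm]; exact hx0
      have h2 : Neg.neg ⁻¹' interior (-K) ⊆ interior (Neg.neg ⁻¹' (-K)) :=
        preimage_interior_subset_interior_preimage continuous_neg
      have h3 : (Neg.neg ⁻¹' (-K) : Set Plane) = K := by
        rw [Set.neg_preimage, neg_neg]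
      rw [h3] at h2
      exact h2 (by simpa using h1)
    have h0 : (0 : Plane) = (1/2 : ℝ) • x0 + (1/2 : ℝ) • (-x0) := by module
    rw [h0]
    exact hconv.interior hx0 hx0' (by norm_num) (by norm_num) (by norm_num)
  have hK0 : K ∈ nhds (0 : Plane) := mem_interior_iff_mem_nhds.1 h0i
  have habs : Absorbent ℝ K := absorbent_nhds_zero hK0
  have hbdd : Bornology.IsVonNBounded ℝ K :=
    NormedSpace.isVonNBounded_of_isBounded _ hcomp.isBounded
  have hpos : ∀ x : Plane, x ≠ 0 → 0 < gauge K x := fun x hx => (gauge_pos habs hbdd).2 hx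
  have hfr : ∀ x : Plane, x ∈ frontier K ↔ gauge K x = 1 :=
    fun x => Iff.symm (gauge_eq_one_iff_mem_frontier hconv hK0)
  have hcont : Continuous (gauge K) := continuous_gauge hconv hK0
  have hintf : ∀ x : Plane, gauge K x < 1 ↔ x ∈ interior K :=
    fun _ => gauge_lt_one_iff_mem_interior hconv hK0
  have hsymm' : ∀ x ∈ K, -x ∈ K := by
    intro x hx
    rw [hKsymm]
    exact Set.neg_mem_neg.2 hx
  have gsym : ∀ x : Plane, gauge K (-x) = gauge K x := gauge_neg hsymm'
  have gabs : ∀ (r : ℝ) (x : Plane), gauge K (r • x) = |r| * gauge K x := by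
    intro r x
    rcases le_or_gt 0 r with h | h
    · rw [gauge_smul_of_nonneg h, abs_of_nonneg h, smul_eq_mul]
    · have h1 : r • x = -((-r) • x) := by module
      rw [h1, gsym, gauge_smul_of_nonneg (by linarith), abs_of_neg h, smul_eq_mul]
  -- the endpoints and the direction of the segment
  have ga : gauge K a = 1 := (hfr a).1 (hseg (left_mem_segment ℝ a b))
  have gb : gauge K b = 1 := (hfr b).1 (hseg (right_mem_segment ℝ a b))
  set c : ℝ := gauge K (b - a) with hcdef
  have hc : 0 < c := hpos _ (sub_ne_zero_of_ne (Ne.symm hab))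
  set v : Plane := c⁻¹ • (b - a) with hvdef
  have gv : gauge K v = 1 := by
    rw [hvdef, gabs, abs_of_pos (inv_pos.2 hc), ← hcdef, inv_mul_cancel₀ hc.ne']
  have hb_av : b = a + c • v := by
    rw [hvdef, smul_smul, mul_inv_cancel₀ hc.ne', one_smul]
    abel
  -- the line through the segment avoids the interior of K
  have hKfr : frontier K ⊆ K := hcomp.isClosed.frontier_subset
  have hline : ∀ s : ℝ, 1 ≤ gauge K (a + s • (b - a)) := by
    intro s
    by_contra hlt
    push_neg at hlt
    have hpint : a + s • (b - a) ∈ interior K := (hintf _).1 hlt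
    set m : Plane := (1/2 : ℝ) • a + (1/2 : ℝ) • b with hmdef
    have hmseg : m ∈ segment ℝ a b := ⟨1/2, 1/2, by norm_num, by norm_num, by norm_num, rfl⟩
    have hmnotint : m ∉ interior K := by
      have h1 := hseg hmseg
      rw [hcomp.isClosed.frontier_eq] at h1
      exact h1.2
    have hbK : b ∈ closure K := subset_closure (hKfr (hseg (right_mem_segment ℝ a b)))
    have haK : a ∈ closure K := subset_closure (hKfr (hseg (left_mem_segment ℝ a b)))
    rcases lt_trichotomy s (1/2) with h | h | h
    · set τ : ℝ := (1/2 - s) / (1 - s) with hτdef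
      have hτ0 : 0 < τ := div_pos (by linarith) (by linarith)
      have hτ1 : τ < 1 := by
        rw [hτdef, div_lt_one (by linarith)]
        linarith
      have h1s : (1:ℝ) - s ≠ 0 := by linarith
      have hτid : (1 - τ) * s + τ = 1/2 := by
        rw [hτdef]
        field_simp
        ring
      have hmem : m ∈ openSegment ℝ (a + s • (b - a)) b := by
        refine ⟨1 - τ, τ, by linarith, hτ0, by ring, ?_⟩
        have key : (1 - τ) • (a + s • (b - a)) + τ • b
            = a + ((1 - τ) * s + τ) • (b - a) := by module
        rw [key, hτid, hmdef]
        module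
      exact hmnotint (hconv.openSegment_interior_closure_subset_interior hpint hbK hmem)
    · apply hmnotint
      have heq : a + s • (b - a) = m := by
        rw [h, hmdef]; module
      rwa [heq] at hpint
    · set τ : ℝ := (s - 1/2) / s with hτdef
      have hs0 : 0 < s := by linarith
      have hτ0 : 0 < τ := div_pos (by linarith) hs0
      have hτ1 : τ < 1 := by
        rw [hτdef, div_lt_one hs0]
        linarith
      have hτid : (1 - τ) * s = 1/2 := by
        rw [hτdef]
        field_simp
        ring
      have hmem : m ∈ openSegment ℝ (a + s • (b - a)) a := by
        refine ⟨1 - τ, τ, by linarith, hτ0, by ring, ?_⟩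
        have key : (1 - τ) • (a + s • (b - a)) + τ • a
            = a + ((1 - τ) * s) • (b - a) := by module
        rw [key, hτid, hmdef]
        module
      exact hmnotint (hconv.openSegment_interior_closure_subset_interior hpint haK hmem)
  -- Birkhoff orthogonality of the endpoints to v
  have hBOa : BOrth K a v := by
    intro t
    rw [ga]
    have h1 : a + t • v = a + (t * c⁻¹) • (b - a) := by rw [hvdef, smul_smul]
    rw [h1]
    exact hline _
  have hBOb : BOrth K b v := by
    intro t
    rw [gb]
    have h1 : b + t • v = a + (1 + t * c⁻¹) • (b - a) := by
      rw [hvdef, smul_smul]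
      module
    rw [h1]
    exact hline _
  -- linear independence of (a, v) and (b, v)
  have hiav : ∀ s t : ℝ, s • a + t • v = 0 → s = 0 ∧ t = 0 := by
    intro s t h
    by_cases hs : s = 0
    · subst hs
      rw [zero_smul, zero_add] at h
      have hv0 : v ≠ 0 := by
        intro h0
        rw [h0, gauge_zero] at gv
        norm_num at gv
      rcases smul_eq_zero.1 h with h | h
      exacts [⟨rfl, h⟩, absurd h hv0]
    · exfalso
      have hav : a = (-(t/s)) • v := by
        have h1 : s • a = -(t • v) := eq_neg_of_add_eq_zero_left h
        calc a = s⁻¹ • (s • a) := by rw [smul_smul, inv_mul_cancel₀ hs, one_smul]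
          _ = s⁻¹ • (-(t • v)) := by rw [h1]
          _ = (-(t/s)) • v := by
              rw [smul_neg, smul_smul, ← neg_smul]
              congr 1
              field_simp
      have habs1 : |(-(t/s))| = 1 := by
        have h1 : gauge K a = |(-(t/s))| := by rw [hav, gabs, gv, mul_one]
        rw [ga] at h1
        exact h1.symm
      rcases (abs_eq (by norm_num : (0:ℝ) ≤ 1)).1 habs1 with h1 | h1
      · have hav1 : a = v := by rw [hav, h1, one_smul]
        have hb1 : b = (1 + c) • v := by rw [hb_av, hav1]; module
        have hgb1 : gauge K b = 1 + c := by
          rw [hb1, gabs, gv, mul_one, abs_of_pos (by linarith)]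
        rw [gb] at hgb1
        linarith
      · have hav1 : a = -v := by rw [hav, h1, neg_one_smul]
        have hbv : b = (c - 1) • v := by rw [hb_av, hav1]; module
        have hgb2 : |c - 1| = 1 := by
          have h2 := gb
          rw [hbv, gabs, gv, mul_one] at h2
          exact h2
        rcases (abs_eq (by norm_num : (0:ℝ) ≤ 1)).1 hgb2 with h2 | h2
        · have hb2 : b = -a := by
            rw [hbv, show c - 1 = (1:ℝ) from h2, one_smul, hav1, neg_neg]
          have h0seg : (0 : Plane) ∈ segment ℝ a b :=
            ⟨1/2, 1/2, by norm_num, by norm_num, by norm_num, by rw [hb2]; module⟩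
          have h3 := (hfr 0).1 (hseg h0seg)
          rw [gauge_zero] at h3
          norm_num at h3
        · linarith
  have hibv : ∀ s t : ℝ, s • b + t • v = 0 → s = 0 ∧ t = 0 := by
    intro s t h
    have key : s • a + (s * c + t) • v = s • b + t • v := by
      rw [hb_av]; module
    obtain ⟨e1, e2⟩ := hiav _ _ (key.trans h)
    refine ⟨e1, ?_⟩
    rw [e1] at e2
    linarith
  -- the two arcs
  obtain ⟨C1, hC1arc, hC1mem⟩ := arc_construct hfr hpos hcont gabs a v ga gv hiav
  obtain ⟨C2, hC2arc, hC2mem⟩ := arc_construct hfr hpos hcont gabs b v gb gv hibv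
  have hC2sub : C2 ⊆ C1 := by
    intro x hx
    obtain ⟨hgx, s, t, hs, ht, hxe⟩ := (hC2mem x).1 hx
    refine (hC1mem x).2 ⟨hgx, s, s * c + t, hs,
      add_nonneg (mul_nonneg hs hc.le) ht, ?_⟩
    rw [hxe, hb_av]
    module
  have hsegC1 : segment ℝ a b ⊆ C1 := by
    intro x hx
    obtain ⟨s', t', hs', ht', hsum, hxe⟩ := hx
    refine (hC1mem x).2 ⟨(hfr x).1 (hseg ⟨s', t', hs', ht', hsum, hxe⟩),
      1, t' * c, zero_le_one, mul_nonneg ht' hc.le, ?_⟩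
    rw [← hxe, hb_av, ← hsum]
    module
  have hdisj : ∀ x ∈ segment ℝ a b, x ∈ C2 → x = b := by
    intro x hx hx2
    obtain ⟨s', t', hs', ht', hsum, hxe⟩ := hx
    obtain ⟨hgx, s, t, hs, ht, hxe2⟩ := (hC2mem x).1 hx2
    have key : (s' + t' - s) • a + ((t' - s) * c - t) • v
        = (s' • a + t' • b) - (s • b + t • v) := by
      rw [hb_av]; module
    have h0 : (s' + t' - s) • a + ((t' - s) * c - t) • v = 0 := by
      rw [key, hxe, ← hxe2, sub_self]
    obtain ⟨e1, e2⟩ := hiav _ _ h0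
    have hs1 : s = 1 := by linarith
    have ht'le : t' ≤ 1 := by linarith
    have htle : t ≤ 0 := by nlinarith [mul_nonneg (by linarith : (0:ℝ) ≤ 1 - t') hc.le]
    have ht0 : t = 0 := le_antisymm htle ht
    have ht'1 : t' = 1 := by
      have h3 : (t' - 1) * c = 0 := by rw [hs1] at e2; linarith
      rcases mul_eq_zero.1 h3 with h4 | h4
      · linarith
      · exact absurd h4 hc.ne'
    have hs'0 : s' = 0 := by linarith
    rw [← hxe, hs'0, ht'1, zero_smul, one_smul, zero_add]
  -- measure computation
  have hC1val : μ C1 = ENNReal.ofReal (Real.pi / 2) := hμ.2 C1 a v hC1arc hBOa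
  have hC2val : μ C2 = ENNReal.ofReal (Real.pi / 2) := hμ.2 C2 b v hC2arc hBOb
  have hm2 : MeasurableSet C2 := hC2arc.2.1.measurableSet
  have hdiff0 : μ (C1 \ C2) = 0 := by
    rw [measure_diff hC2sub hm2.nullMeasurableSet
      (by rw [hC2val]; exact ENNReal.ofReal_ne_top), hC1val, hC2val, tsub_self]
  have hsub : segment ℝ a b ⊆ (C1 \ C2) ∪ {b} := by
    intro x hx
    by_cases hxb : x = b
    · exact Or.inr (by simp [hxb])
    · exact Or.inl ⟨hsegC1 hx, fun hx2 => hxb (hdisj x hx hx2)⟩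
  refine le_antisymm ?_ zero_le
  calc μ (segment ℝ a b) ≤ μ ((C1 \ C2) ∪ {b}) := measure_mono hsub
    _ ≤ μ (C1 \ C2) + μ {b} := measure_union_le _ _
    _ = 0 := by rw [hdiff0, hμ.1.2.2.2 b, add_zero]
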